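/- Let y ∈ A⟦t⟧ with constant coefficient 1 satisfy L(y) = 0. For every 0 ≤ i ≤ n−4 there exists g ∈ A⟦t⟧ with g·P·y² = ∫(t^i·y²), and for this (unique) g one has ∂_i y = y·∫g. This is the formal power series version of the integral representation ∂y/∂ρ_i = y(t)·∫₀^t [ ∫₀^{t₁} t₂^i y(t₂)² dt₂ ] / ( y(t₁)²·P(t₁) ) dt₁. -/

import Mathlib

noncomputable section

open PowerSeries

/-- The ring of accessory parameters: polynomials in `ρ_0, …, ρ_{n-4}` over `ℂ`. -/
abbrev AccRing (n : ℕ) : Type := MvPolynomial (Fin (n - 3)) ℂ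

/-- Coefficientwise partial derivative of a power series with respect to the
accessory parameter `ρ_i`. -/
noncomputable def pd {n : ℕ} (i : Fin (n - 3)) (u : PowerSeries (AccRing n)) :
    PowerSeries (AccRing n) :=
  PowerSeries.mk fun m => MvPolynomial.pderiv i (PowerSeries.coeff m u)

/-- The polynomial `P = t·∏_{j=1}^{n-2}(t - α_j)`, viewed in `A⟦t⟧`. -/
noncomputable def Ppoly (n : ℕ) (α : Fin (n - 2) → ℂ) : PowerSeries (AccRing n) :=
  X * ∏ j, (X - C (R := AccRing n) (MvPolynomial.C (α j)))

/-- The polynomial `P̂ = P/t = ∏_{j=1}^{n-2}(t - α_j)`, viewed in `A⟦t⟧`. -/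
noncomputable def PhatPoly (n : ℕ) (α : Fin (n - 2) → ℂ) : PowerSeries (AccRing n) :=
  ∏ j, (X - C (R := AccRing n) (MvPolynomial.C (α j)))

/-- `κ = P̂(0) = (-1)^(n-2) ∏ α_j`. -/
noncomputable def kappa (n : ℕ) (α : Fin (n - 2) → ℂ) : ℂ :=
  (-1) ^ (n - 2) * ∏ j, α j

/-- `P1 = (1 - n/2)²·t^(n-3) - ∑_{i=0}^{n-4} ρ_i·t^i`, viewed in `A⟦t⟧`. -/
noncomputable def P1poly (n : ℕ) : PowerSeries (AccRing n) :=
  C (R := AccRing n) (MvPolynomial.C ((1 - (n : ℂ) / 2) ^ 2)) * X ^ (n - 3)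
    - ∑ i : Fin (n - 3), C (R := AccRing n) (MvPolynomial.X i) * X ^ (i : ℕ)

/-- The differential operator `L u = (P·u')' + P1·u`. -/
noncomputable def Lop (n : ℕ) (α : Fin (n - 2) → ℂ) (u : PowerSeries (AccRing n)) :
    PowerSeries (AccRing n) :=
  derivative (AccRing n) (Ppoly n α * derivative (AccRing n) u) + P1poly n * u

/-- Formal antiderivative with zero constant term. -/
noncomputable def integ {A : Type*} [CommRing A] [Algebra ℚ A] (u : PowerSeries A) :
    PowerSeries A :=
  PowerSeries.mk fun m => if m = 0 then 0 else ((m : ℚ)⁻¹) • PowerSeries.coeff (R := A) (m - 1) u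

/-- Formal substitution of the power series `S` (with zero constant term) into `G`. -/
noncomputable def substS {A : Type*} [CommSemiring A] (S G : PowerSeries A) : PowerSeries A :=
  PowerSeries.mk fun m =>
    ∑ j ∈ Finset.range (m + 1), PowerSeries.coeff (R := A) j G * PowerSeries.coeff (R := A) m (S ^ j)

/-- The operator `θ G = X·dG/dX`. -/
noncomputable def theta {A : Type*} [CommRing A] (G : PowerSeries A) : PowerSeries A :=
  PowerSeries.X * PowerSeries.derivative A G

/-- The formal Eichler integral: divide the `m`-th coefficient by `m³`. -/
noncomputable def eich {A : Type*} [CommRing A] [Algebra ℚ A] (H : PowerSeries A) :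
    PowerSeries A :=
  PowerSeries.mk fun m => (((m : ℚ) ^ 3)⁻¹) • PowerSeries.coeff (R := A) m H

/-- Formal exponential of a power series with zero constant term. -/
noncomputable def expS {A : Type*} [CommRing A] [Algebra ℚ A] (S : PowerSeries A) :
    PowerSeries A :=
  substS S (PowerSeries.exp A)

/-! ### Auxiliary lemmas -/

/-- Product rule for the power-series derivative. -/
lemma dmul {A : Type*} [CommRing A] (u v : PowerSeries A) :
    derivative A (u * v) = derivative A u * v + u * derivative A v := by
  rw [Derivation.leibniz]; simp only [smul_eq_mul]; ring

lemma constantCoeff_integ {A : Type*} [CommRing A] [Algebra ℚ A] (u : PowerSeries A) :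
    constantCoeff (R := A) (integ u) = 0 := by
  simp [integ, constantCoeff_mk]

lemma derivative_integ {A : Type*} [CommRing A] [Algebra ℚ A] (u : PowerSeries A) :
    derivative A (integ u) = u := by
  ext m
  rw [coeff_derivative, integ, coeff_mk]
  simp only [Nat.succ_ne_zero, if_false, Nat.add_sub_cancel]
  have h1 : coeff (R := A) m u * ((m : A) + 1) = (((m : ℚ) + 1)) • coeff (R := A) m u := by
    rw [Algebra.smul_def, map_add, map_natCast, map_one, mul_comm]
  rw [smul_mul_assoc, h1, smul_smul]
  have h2 : (((m + 1 : ℕ) : ℚ))⁻¹ * ((m : ℚ) + 1) = 1 := by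
    push_cast
    exact inv_mul_cancel₀ (by positivity)
  rw [h2, one_smul]

section pdlem
variable {n : ℕ} (i : Fin (n - 3))

lemma coeff_pd (u : PowerSeries (AccRing n)) (m : ℕ) :
    coeff (R := AccRing n) m (pd i u) = MvPolynomial.pderiv i (coeff (R := AccRing n) m u) := by
  simp [pd]

lemma pd_zero : pd i (0 : PowerSeries (AccRing n)) = 0 := by
  ext m; simp [coeff_pd]

lemma pd_add (u v : PowerSeries (AccRing n)) : pd i (u + v) = pd i u + pd i v := by
  ext m; simp [coeff_pd]

lemma pd_sub (u v : PowerSeries (AccRing n)) : pd i (u - v) = pd i u - pd i v := by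
  ext m; simp [coeff_pd]

lemma pd_sum {s : Finset (Fin (n - 3))} (f : Fin (n - 3) → PowerSeries (AccRing n)) :
    pd i (∑ j ∈ s, f j) = ∑ j ∈ s, pd i (f j) := by
  ext m; simp [coeff_pd]

lemma pd_mul (u v : PowerSeries (AccRing n)) :
    pd i (u * v) = pd i u * v + u * pd i v := by
  ext m
  simp only [map_add, coeff_pd, PowerSeries.coeff_mul, map_sum, MvPolynomial.pderiv_mul]
  rw [← Finset.sum_add_distrib]

lemma pd_derivative (u : PowerSeries (AccRing n)) :
    pd i (derivative (AccRing n) u) = derivative (AccRing n) (pd i u) := by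
  ext m
  rw [coeff_pd, coeff_derivative, coeff_derivative, coeff_pd]
  have h : ((m : AccRing n) + 1) = MvPolynomial.C ((m : ℂ) + 1) := by
    rw [map_add, map_natCast, map_one]
  rw [h, MvPolynomial.pderiv_mul, MvPolynomial.pderiv_C, mul_zero, add_zero]

lemma pd_C (a : AccRing n) : pd i (C (R := AccRing n) a) = C (MvPolynomial.pderiv i a) := by
  ext m
  simp [coeff_pd, coeff_C, apply_ite (MvPolynomial.pderiv i)]

lemma pd_X_pow (k : ℕ) : pd i ((X : PowerSeries (AccRing n)) ^ k) = 0 := by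
  ext m
  simp [coeff_pd, coeff_X_pow, apply_ite (MvPolynomial.pderiv i), MvPolynomial.pderiv_one]

lemma pd_map (q : PowerSeries ℂ) :
    pd i (PowerSeries.map (MvPolynomial.C : ℂ →+* AccRing n) q) = 0 := by
  ext m
  simp [coeff_pd, coeff_map, MvPolynomial.pderiv_C]

variable (α : Fin (n - 2) → ℂ)

lemma Ppoly_eq : Ppoly n α
    = PowerSeries.map (MvPolynomial.C : ℂ →+* AccRing n) (X * ∏ j, (X - C (R := ℂ) (α j))) := by
  simp [Ppoly, map_mul, map_prod, map_sub, PowerSeries.map_X, PowerSeries.map_C]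

lemma pd_Ppoly : pd i (Ppoly n α) = 0 := by
  rw [Ppoly_eq, pd_map]

lemma pd_P1poly : pd i (P1poly n) = -(X ^ (i : ℕ)) := by
  rw [P1poly, pd_sub, pd_mul, pd_C, pd_X_pow, pd_sum]
  have h : ∀ j : Fin (n - 3), pd i (C (R := AccRing n) (MvPolynomial.X j) * X ^ (j : ℕ))
      = C (R := AccRing n) (MvPolynomial.pderiv i (MvPolynomial.X j)) * X ^ (j : ℕ) := by
    intro j
    rw [pd_mul, pd_C, pd_X_pow, mul_zero, add_zero]
  simp only [h, MvPolynomial.pderiv_X]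
  rw [Finset.sum_eq_single i]
  · simp [MvPolynomial.pderiv_C]
  · intro j _ hj
    rw [Pi.single_eq_of_ne ?_ _]
    · simp
    · exact fun e => hj (by exact e ▸ rfl)
  · intro h; exact absurd (Finset.mem_univ i) h

end pdlem

/-- integral representation of `∂_i y`: there is `g` with
`g·P·y² = ∫(t^i·y²)`, and for this `g` one has `∂_i y = y·∫ g`. -/
theorem stmt4 (n : ℕ) (hn : 4 ≤ n) (α : Fin (n - 2) → ℂ)
    (hα0 : ∀ j, α j ≠ 0) (hαinj : Function.Injective α)
    (y : PowerSeries (AccRing n))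
    (hy1 : constantCoeff (R := AccRing n) y = 1) (hy : Lop n α y = 0)
    (i : Fin (n - 3)) :
    (∃ g : PowerSeries (AccRing n),
        g * Ppoly n α * y ^ 2 = integ (X ^ (i : ℕ) * y ^ 2)) ∧
    (∀ g : PowerSeries (AccRing n),
        g * Ppoly n α * y ^ 2 = integ (X ^ (i : ℕ) * y ^ 2) →
          pd i y = y * integ g) := by
  classical
  have hy0 : y ≠ 0 := by
    intro h
    rw [h, map_zero] at hy1
    exact zero_ne_one hy1
  have hyu : IsUnit y := isUnit_iff_constantCoeff.mpr (by rw [hy1]; exact isUnit_one)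
  have hPP : Ppoly n α = X * PhatPoly n α := rfl
  have hy' : derivative (AccRing n) (Ppoly n α * derivative (AccRing n) y)
      + P1poly n * y = 0 := hy
  constructor
  · -- existence of g
    have hPhatU : IsUnit (PhatPoly n α * y ^ 2) := by
      rw [isUnit_iff_constantCoeff, map_mul, map_pow, hy1, one_pow, mul_one, PhatPoly,
        map_prod]
      simp only [map_sub, constantCoeff_X, constantCoeff_C, zero_sub]
      rw [show (∏ j, -(MvPolynomial.C (α j) : AccRing n))
          = MvPolynomial.C (∏ j, -(α j)) by rw [map_prod]; simp]
      exact (isUnit_iff_ne_zero.mpr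
        (Finset.prod_ne_zero_iff.mpr fun j _ => neg_ne_zero.mpr (hα0 j))).map
        (MvPolynomial.C : ℂ →+* AccRing n)
    obtain ⟨V, hV⟩ := hPhatU
    obtain ⟨w, hw⟩ := X_dvd_iff.mpr (constantCoeff_integ (X ^ (i : ℕ) * y ^ 2))
    refine ⟨w * ↑V⁻¹, ?_⟩
    calc w * ↑V⁻¹ * Ppoly n α * y ^ 2
        = (X * w) * (↑V⁻¹ * (PhatPoly n α * y ^ 2)) := by rw [hPP]; ring
      _ = (X * w) * (↑V⁻¹ * ↑V) := by rw [hV]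
      _ = X * w := by rw [Units.inv_mul, mul_one]
      _ = integ (X ^ (i : ℕ) * y ^ 2) := hw.symm
  · -- the identity for any such g
    intro g hg
    -- L (pd i y) = X^i y
    have hzL : derivative (AccRing n) (Ppoly n α * derivative (AccRing n) (pd i y))
        + P1poly n * pd i y = X ^ (i : ℕ) * y := by
      have h0 := congrArg (pd i) hy'
      rw [pd_add, pd_derivative, pd_mul, pd_Ppoly, pd_derivative, pd_mul, pd_P1poly,
        pd_zero, zero_mul, zero_add] at h0
      linear_combination h0
    have hDF : derivative (AccRing n) (integ g) = g := derivative_integ g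
    have hgP : derivative (AccRing n) (g * Ppoly n α * y ^ 2) = X ^ (i : ℕ) * y ^ 2 := by
      rw [hg, derivative_integ]
    -- L (y * integ g) = X^i y
    have h2 : Ppoly n α * derivative (AccRing n) (y * integ g)
        = (Ppoly n α * derivative (AccRing n) y) * integ g + (Ppoly n α * y) * g := by
      rw [dmul, hDF]; ring
    have h3 : derivative (AccRing n) (Ppoly n α * derivative (AccRing n) (y * integ g))
        = (derivative (AccRing n) (Ppoly n α * derivative (AccRing n) y) * integ g
            + (Ppoly n α * derivative (AccRing n) y) * g)
          + derivative (AccRing n) ((Ppoly n α * y) * g) := by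
      rw [h2, map_add, dmul, hDF]
    have h4 : derivative (AccRing n) ((Ppoly n α * y) * g) * y
        + ((Ppoly n α * y) * g) * derivative (AccRing n) y = X ^ (i : ℕ) * y ^ 2 := by
      calc derivative (AccRing n) ((Ppoly n α * y) * g) * y
            + ((Ppoly n α * y) * g) * derivative (AccRing n) y
          = derivative (AccRing n) (((Ppoly n α * y) * g) * y) := (dmul _ _).symm
        _ = derivative (AccRing n) (g * Ppoly n α * y ^ 2) := by ring_nf
        _ = X ^ (i : ℕ) * y ^ 2 := hgP
    have hwL : derivative (AccRing n) (Ppoly n α * derivative (AccRing n) (y * integ g))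
        + P1poly n * (y * integ g) = X ^ (i : ℕ) * y := by
      apply mul_left_cancel₀ hy0
      linear_combination y * h3 + h4 + (integ g) * y * hy'
    -- uniqueness via the Wronskian
    have hLu : derivative (AccRing n)
        (Ppoly n α * derivative (AccRing n) (pd i y - y * integ g))
        + P1poly n * (pd i y - y * integ g) = 0 := by
      rw [map_sub, mul_sub, map_sub]
      linear_combination hzL - hwL
    set u : PowerSeries (AccRing n) := pd i y - y * integ g with hu_def
    have hDW : derivative (AccRing n)
        ((Ppoly n α * derivative (AccRing n) u) * y
          - (Ppoly n α * derivative (AccRing n) y) * u) = 0 := by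
      rw [map_sub, dmul (Ppoly n α * derivative (AccRing n) u) y,
        dmul (Ppoly n α * derivative (AccRing n) y) u]
      linear_combination y * hLu - u * hy'
    have hW0 : constantCoeff (R := AccRing n)
        ((Ppoly n α * derivative (AccRing n) u) * y
          - (Ppoly n α * derivative (AccRing n) y) * u) = 0 := by
      have hP0 : constantCoeff (R := AccRing n) (Ppoly n α) = 0 := by
        rw [Ppoly, map_mul, constantCoeff_X, zero_mul]
      simp [map_sub, map_mul, hP0]
    have hW : (Ppoly n α * derivative (AccRing n) u) * y
        - (Ppoly n α * derivative (AccRing n) y) * u = 0 := by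
      have := derivative.ext (R := AccRing n)
        (f := (Ppoly n α * derivative (AccRing n) u) * y
          - (Ppoly n α * derivative (AccRing n) y) * u) (g := 0)
        (by rw [hDW, map_zero]) (by rw [hW0, map_zero])
      exact this
    have hPne : Ppoly n α ≠ 0 := by
      rw [Ppoly]
      apply mul_ne_zero X_ne_zero
      apply Finset.prod_ne_zero_iff.mpr
      intro j _ h
      have := congrArg (coeff (R := AccRing n) 1) h
      simp [coeff_X, coeff_C] at this
    have hcross : derivative (AccRing n) u * y - derivative (AccRing n) y * u = 0 := by
      have hm : Ppoly n α * (derivative (AccRing n) u * y - derivative (AccRing n) y * u)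
          = 0 := by linear_combination hW
      rcases mul_eq_zero.mp hm with h | h
      · exact absurd h hPne
      · exact h
    -- constant coefficient of u is zero
    have hz0 : constantCoeff (R := AccRing n) (pd i y) = 0 := by
      rw [← coeff_zero_eq_constantCoeff_apply, coeff_pd,
        coeff_zero_eq_constantCoeff_apply, hy1, MvPolynomial.pderiv_one]
    have hu0 : constantCoeff (R := AccRing n) u = 0 := by
      rw [hu_def, map_sub, map_mul, hz0, constantCoeff_integ, mul_zero, sub_zero]
    -- divide by y
    obtain ⟨Y, hY⟩ := hyu
    have hvy : (u * ↑Y⁻¹) * y = u := by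
      rw [mul_assoc, ← hY, Units.inv_mul, mul_one]
    have hDu : derivative (AccRing n) u
        = derivative (AccRing n) (u * ↑Y⁻¹) * y + (u * ↑Y⁻¹) * derivative (AccRing n) y := by
      conv_lhs => rw [← hvy]
      rw [dmul]
    have h5 : derivative (AccRing n) (u * ↑Y⁻¹) * (y * y) = 0 := by
      linear_combination hcross - y * hDu - derivative (AccRing n) y * hvy
    have hDv : derivative (AccRing n) (u * ↑Y⁻¹) = 0 := by
      have hyy : (y * y) ≠ 0 := mul_ne_zero hy0 hy0
      have : derivative (AccRing n) (u * ↑Y⁻¹) * (y * y) = 0 * (y * y) := by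
        rw [h5, zero_mul]
      exact mul_right_cancel₀ hyy this
    have hv0 : u * ↑Y⁻¹ = 0 := by
      have := derivative.ext (R := AccRing n) (f := u * ↑Y⁻¹) (g := 0)
        (by rw [hDv, map_zero]) (by rw [map_mul, hu0, zero_mul, map_zero])
      exact this
    have hu : u = 0 := by rw [← hvy, hv0, zero_mul]
    rw [hu_def] at hu
    exact sub_eq_zero.mp hu
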